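/- Let λ > 0 and let P_λ(x) = e^{−λ} λ^x / x! denote the Poisson probabilities, with the convention P_λ(−1) = 0. Then for every x ∈ ℕ one has |P_λ(x) − P_λ(x−1)| ≤ min(1, C/λ), where C = e^{1/√2}/√(2π); moreover C ≤ 1. -/

import Mathlib

/-- Poisson probabilities: `P_λ(x) = e^{-λ} λ^x / x!`. -/
noncomputable def poissonPmf (lam : ℝ) (x : ℕ) : ℝ :=
  Real.exp (-lam) * lam ^ x / Nat.factorial x

open Real

lemma stirling_lb (n : ℕ) (hn : 1 ≤ n) :
    Real.sqrt π * (Real.sqrt (2 * n) * ((n : ℝ) / Real.exp 1) ^ n) ≤ (Nat.factorial n : ℝ) := by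
  obtain ⟨m, rfl⟩ := Nat.exists_eq_add_of_le hn
  have h1 : Filter.Tendsto (Stirling.stirlingSeq ∘ Nat.succ) Filter.atTop (nhds (Real.sqrt π)) :=
    Stirling.tendsto_stirlingSeq_sqrt_pi.comp (Filter.tendsto_add_atTop_nat 1)
  have h2 := Stirling.stirlingSeq'_antitone.le_of_tendsto h1 m
  have h3 : Real.sqrt π ≤ Stirling.stirlingSeq (1 + m) := by
    simpa [Nat.succ_eq_add_one, Nat.add_comm] using h2
  rw [Stirling.stirlingSeq] at h3
  have hpos : 0 < Real.sqrt (2 * (1 + m : ℕ) : ℝ) * (((1 + m : ℕ) : ℝ) / Real.exp 1) ^ (1 + m) := by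
    apply mul_pos (Real.sqrt_pos.2 (by positivity))
    positivity
  rw [le_div_iff₀ hpos] at h3
  linarith [h3]

lemma pmf_le_exp (lam : ℝ) (hlam : 0 < lam) (x : ℕ) (hx : 1 ≤ x) :
    poissonPmf lam x ≤
      Real.exp ((x : ℝ) * Real.log (lam / x) + x - lam) / Real.sqrt (2 * π * x) := by
  have hxR : (0:ℝ) < x := by exact_mod_cast hx
  have hfac := stirling_lb x hx
  have hDpos : (0:ℝ) < Real.sqrt π * (Real.sqrt (2 * x) * ((x : ℝ) / Real.exp 1) ^ x) := by
    apply mul_pos (Real.sqrt_pos.2 Real.pi_pos)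
    apply mul_pos (Real.sqrt_pos.2 (by positivity))
    positivity
  have h1 : poissonPmf lam x ≤
      Real.exp (-lam) * lam ^ x / (Real.sqrt π * (Real.sqrt (2 * x) * ((x : ℝ) / Real.exp 1) ^ x)) := by
    unfold poissonPmf
    apply div_le_div_of_nonneg_left (by positivity) hDpos hfac
  refine h1.trans_eq ?_
  -- rewrite both sides in exp form
  have hlx : lam ^ x = Real.exp ((x:ℝ) * Real.log lam) := by
    rw [show (x:ℝ) * Real.log lam = ((x:ℕ):ℝ) * Real.log lam from rfl, Real.exp_nat_mul,
      Real.exp_log hlam]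
  have hxe : ((x:ℝ) / Real.exp 1) ^ x = Real.exp ((x:ℝ) * (Real.log x - 1)) := by
    rw [Real.exp_nat_mul, Real.exp_sub, Real.exp_log hxR]
  have hsq : Real.sqrt (2 * π * x) = Real.sqrt π * Real.sqrt (2 * x) := by
    rw [← Real.sqrt_mul Real.pi_pos.le]
    ring_nf
  have hlog : (x:ℝ) * Real.log (lam / x) + x - lam
      = (-lam + (x:ℝ) * Real.log lam) - (x:ℝ) * (Real.log x - 1) := by
    rw [Real.log_div hlam.ne' hxR.ne']
    ring
  rw [hlx, hxe, hsq, hlog, Real.exp_sub, Real.exp_add]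
  have n1 : Real.sqrt π ≠ 0 := (Real.sqrt_pos.2 Real.pi_pos).ne'
  have n2 : Real.sqrt (2 * (x:ℝ)) ≠ 0 := (Real.sqrt_pos.2 (by positivity)).ne'
  field_simp [Real.exp_ne_zero]



lemma nonneg_of_deriv (f f' : ℝ → ℝ) (h0 : f 0 = 0)
    (hd : ∀ y : ℝ, 0 ≤ y → HasDerivAt f (f' y) y)
    (h' : ∀ y : ℝ, 0 ≤ y → 0 ≤ f' y) {u : ℝ} (hu : 0 ≤ u) : 0 ≤ f u := by
  have mono : MonotoneOn f (Set.Ici 0) := by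
    apply monotoneOn_of_deriv_nonneg (convex_Ici 0)
    · exact continuousOn_of_forall_continuousAt fun y hy => (hd y hy).continuousAt
    · intro y hy
      rw [interior_Ici] at hy
      exact (hd y (le_of_lt hy)).differentiableAt.differentiableWithinAt
    · intro y hy
      rw [interior_Ici] at hy
      rw [(hd y (le_of_lt hy)).deriv]
      exact h' y (le_of_lt hy)
  calc (0:ℝ) = f 0 := h0.symm
  _ ≤ f u := mono Set.self_mem_Ici hu hu

lemma log_le_cubic {u : ℝ} (hu : 0 ≤ u) :
    Real.log (1 + u) ≤ u - u ^ 2 / 2 + u ^ 3 / 3 := by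
  have := nonneg_of_deriv (fun y => y - y ^ 2 / 2 + y ^ 3 / 3 - Real.log (1 + y))
    (fun y => 1 - 2 * y / 2 + 3 * y ^ 2 / 3 - (1 + y)⁻¹) (by simp)
    (fun y hy => by
      have h1 : (0:ℝ) < 1 + y := by linarith
      exact (((hasDerivAt_id y).sub (by simpa using (hasDerivAt_pow 2 y).div_const 2)).add
        (by simpa using (hasDerivAt_pow 3 y).div_const 3)).sub
        (by simpa using ((hasDerivAt_id y).const_add 1).log h1.ne'))
    (fun y hy => by
      have h1 : (0:ℝ) < 1 + y := by linarith
      rw [sub_nonneg, ← one_div, div_le_iff₀ h1]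
      nlinarith) hu
  linarith

lemma quartic_le_log {u : ℝ} (hu : 0 ≤ u) :
    u - u ^ 2 / 2 + u ^ 3 / 3 - u ^ 4 / 4 ≤ Real.log (1 + u) := by
  have := nonneg_of_deriv (fun y => Real.log (1 + y) - (y - y ^ 2 / 2 + y ^ 3 / 3 - y ^ 4 / 4))
    (fun y => (1 + y)⁻¹ - (1 - 2 * y / 2 + 3 * y ^ 2 / 3 - 4 * y ^ 3 / 4)) (by simp)
    (fun y hy => by
      have h1 : (0:ℝ) < 1 + y := by linarith
      exact (by simpa using ((hasDerivAt_id y).const_add 1).log h1.ne' :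
          HasDerivAt (fun y : ℝ => Real.log (1 + y)) (1 + y)⁻¹ y).sub
        ((((hasDerivAt_id y).sub (by simpa using (hasDerivAt_pow 2 y).div_const 2)).add
          (by simpa using (hasDerivAt_pow 3 y).div_const 3)).sub
          (by simpa using (hasDerivAt_pow 4 y).div_const 4)))
    (fun y hy => by
      have h1 : (0:ℝ) < 1 + y := by linarith
      rw [sub_nonneg, ← one_div, le_div_iff₀ h1]
      nlinarith) hu
  linarith

-- t * exp(-(c*t)) ≤ 1/(c·e)
lemma exp_lin {c t : ℝ} (hc : 0 < c) (ht : 0 ≤ t) :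
    t * Real.exp (-(c * t)) ≤ 1 / (c * Real.exp 1) := by
  have h := Real.add_one_le_exp (c * t - 1)
  have h2 : c * t * Real.exp 1 ≤ Real.exp (c * t) := by
    rw [show Real.exp (c*t) = Real.exp (c*t-1) * Real.exp 1 by rw [← Real.exp_add]; ring_nf]
    nlinarith [Real.exp_pos (1:ℝ), Real.exp_pos (c*t-1)]
  have h3 : t * Real.exp 1 ≤ Real.exp (c * t) / c := by
    rw [le_div_iff₀ hc]; nlinarith
  calc t * Real.exp (-(c * t)) = (t * Real.exp 1) * (Real.exp (c*t))⁻¹ / Real.exp 1 := by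
        rw [Real.exp_neg]; field_simp [Real.exp_ne_zero]
  _ ≤ (Real.exp (c*t) / c) * (Real.exp (c*t))⁻¹ / Real.exp 1 := by
        gcongr
  _ = 1 / (c * Real.exp 1) := by field_simp [Real.exp_ne_zero]

-- t * exp(-(t^2/(2a))) ≤ √a · e^{-1/2}
lemma gauss_lin {a t : ℝ} (ha : 0 < a) (ht : 0 ≤ t) :
    t * Real.exp (-(t ^ 2 / (2 * a))) ≤ Real.sqrt a * Real.exp (-(1/2 : ℝ)) := by
  have h1 : t ^ 2 * Real.exp (-((1/a) * t ^ 2)) ≤ 1 / ((1/a) * Real.exp 1) :=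
    exp_lin (by positivity) (by positivity)
  have h2 : (t * Real.exp (-(t ^ 2 / (2 * a)))) ^ 2 ≤ a / Real.exp 1 := by
    rw [mul_pow, ← Real.exp_nat_mul]
    calc t ^ 2 * Real.exp (2 * -(t ^ 2 / (2 * a))) = t ^ 2 * Real.exp (-((1/a) * t^2)) := by
          congr 2; field_simp
    _ ≤ 1 / ((1/a) * Real.exp 1) := h1
    _ = a / Real.exp 1 := by field_simp
  have h4 : t * Real.exp (-(t ^ 2 / (2 * a))) ≤ Real.sqrt (a / Real.exp 1) := by
    rw [Real.le_sqrt (mul_nonneg ht (Real.exp_pos _).le)]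
    · exact h2
    · positivity
  calc t * Real.exp (-(t ^ 2 / (2 * a))) ≤ Real.sqrt (a / Real.exp 1) := h4
  _ = Real.sqrt a * Real.exp (-(1/2:ℝ)) := by
      rw [Real.sqrt_div ha.le, ← Real.exp_half, Real.exp_neg]
      ring_nf



-- numeric facts
lemma sqrt2_ub : Real.sqrt 2 ≤ 10/7 := by
  rw [show (10:ℝ)/7 = Real.sqrt ((10/7)^2) by rw [Real.sqrt_sq (by norm_num)]]
  apply Real.sqrt_le_sqrt; norm_num

lemma sqrt2_lb : (1.4:ℝ) ≤ Real.sqrt 2 := by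
  rw [show (1.4:ℝ) = Real.sqrt (1.4^2) by rw [Real.sqrt_sq (by norm_num)]]
  apply Real.sqrt_le_sqrt; norm_num

lemma inv_sqrt2_lb : (0.7:ℝ) ≤ 1 / Real.sqrt 2 := by
  rw [le_div_iff₀ (by positivity : (0:ℝ) < Real.sqrt 2)]
  nlinarith [sqrt2_ub]

lemma inv_sqrt2_ub : 1 / Real.sqrt 2 ≤ (0.75:ℝ) := by
  rw [div_le_iff₀ (by positivity : (0:ℝ) < Real.sqrt 2)]
  nlinarith [sqrt2_lb]

lemma expC_lb : (1.8225:ℝ) ≤ Real.exp (1 / Real.sqrt 2) := by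
  have h1 : Real.exp (0.35:ℝ) ≥ 1.35 := by
    have := Real.add_one_le_exp (0.35:ℝ); linarith
  have h2 : Real.exp (0.7:ℝ) = Real.exp 0.35 * Real.exp 0.35 := by
    rw [← Real.exp_add]; norm_num
  have h3 : (1.8225:ℝ) ≤ Real.exp (0.7:ℝ) := by nlinarith [Real.exp_pos (0.35:ℝ)]
  exact h3.trans (Real.exp_le_exp.2 inv_sqrt2_lb)

lemma sqrt_two_pi_lb : (2.5:ℝ) ≤ Real.sqrt (2*π) := by
  rw [show (2.5:ℝ) = Real.sqrt (2.5^2) by rw [Real.sqrt_sq (by norm_num)]]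
  apply Real.sqrt_le_sqrt; nlinarith [Real.pi_gt_d6]

lemma sqrt_two_pi_ub : Real.sqrt (2*π) ≤ (2.51:ℝ) := by
  rw [show (2.51:ℝ) = Real.sqrt (2.51^2) by rw [Real.sqrt_sq (by norm_num)]]
  apply Real.sqrt_le_sqrt; nlinarith [Real.pi_lt_d2]

-- C ≤ 1
lemma C_le_one : Real.exp (1 / Real.sqrt 2) / Real.sqrt (2 * π) ≤ 1 := by
  rw [div_le_one (by positivity)]
  have h1 : Real.exp (1 / Real.sqrt 2) ≤ Real.exp 0.75 := Real.exp_le_exp.2 inv_sqrt2_ub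
  have h2 : Real.exp (0.75:ℝ) ≤ 2.5 := by
    have e4 : Real.exp (0.75:ℝ)^4 = Real.exp 3 := by
      rw [← Real.exp_nat_mul]; norm_num
    have e3 : Real.exp (3:ℝ) ≤ 2.7182818286^3 := by
      have : Real.exp (3:ℝ) = Real.exp 1^3 := by rw [← Real.exp_nat_mul]; norm_num
      rw [this]
      have h := Real.exp_one_lt_d9.le
      gcongr
    have : Real.exp (0.75:ℝ)^4 ≤ 2.5^4 := by rw [e4]; nlinarith
    exact le_of_pow_le_pow_left₀ (by norm_num) (by norm_num) this
  linarith [sqrt_two_pi_lb]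

lemma pmf_nonneg (lam : ℝ) (hlam : 0 ≤ lam) (x : ℕ) : 0 ≤ poissonPmf lam x := by
  unfold poissonPmf; positivity

lemma caseD (lam : ℝ) (hlam : 0 < lam) (x : ℕ) (hx : 2 * lam ≤ (x:ℝ)) :
    |lam - (x:ℝ)| * poissonPmf lam x ≤ Real.exp (1 / Real.sqrt 2) / Real.sqrt (2 * π) := by
  set s : ℝ := (x:ℝ) with hs
  have hs0 : 0 < s := by linarith
  have hx1 : 1 ≤ x := Nat.one_le_iff_ne_zero.2 (by rintro rfl; simp [hs] at hs0)
  set c : ℝ := Real.log 2 - 1/2 with hc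
  have hcpos : 0 < c := by
    have := Real.log_two_gt_d9; rw [hc]; linarith
  have hg : s * Real.log (lam / s) + s - lam ≤ -(c * s) := by
    have h1 : 1 - (s / (2 * lam))⁻¹ ≤ Real.log (s / (2 * lam)) :=
      Real.one_sub_inv_le_log_of_pos (by positivity)
    have h2 : (s / (2 * lam))⁻¹ = 2 * lam / s := by field_simp
    have h3 : Real.log (s / (2 * lam)) = Real.log s - Real.log 2 - Real.log lam := by
      rw [Real.log_div hs0.ne' (by positivity), Real.log_mul (by norm_num) hlam.ne']
      ring
    have h4 : Real.log (lam / s) = Real.log lam - Real.log s := Real.log_div hlam.ne' hs0.ne'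
    rw [h2, h3] at h1
    rw [h4, hc]
    have h5 : s * Real.log lam - s * Real.log s ≤ s * (-Real.log 2 - 1) + 2 * lam := by
      have h6 := mul_le_mul_of_nonneg_left h1 hs0.le
      have hdiv : s * (2 * lam / s) = 2 * lam := by field_simp
      nlinarith
    nlinarith [Real.log_two_gt_d9]
  have hpmf := pmf_le_exp lam hlam x hx1
  have habs : |lam - s| ≤ s := by
    rw [abs_sub_comm, abs_of_nonneg (by linarith)]; linarith
  have hsq2 : Real.sqrt (2*π*s) = Real.sqrt (2*π) * Real.sqrt s := by
    rw [← Real.sqrt_mul (by positivity)]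
  have hsx : Real.sqrt s * Real.exp (-(c*s)) ≤ 1 := by
    have h6 : (Real.sqrt s * Real.exp (-(c*s)))^2 = s * Real.exp (-(2*c*s)) := by
      rw [mul_pow, Real.sq_sqrt hs0.le, ← Real.exp_nat_mul]
      ring_nf
    have h7 : s * Real.exp (-(2*c*s)) ≤ 1 / (2*c*Real.exp 1) := by
      have h7' := exp_lin (show 0 < 2*c by linarith) hs0.le (t := s)
      convert h7' using 3 <;> ring
    have h8 : 1 / (2*c*Real.exp 1) ≤ 1 := by
      rw [div_le_one (by positivity)]
      have hc19 : (0.19:ℝ) ≤ c := by rw [hc]; linarith [Real.log_two_gt_d9]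
      have he27 : (2.7:ℝ) ≤ Real.exp 1 := by linarith [Real.exp_one_gt_d9]
      have hce : (0.19:ℝ) * 2.7 ≤ c * Real.exp 1 :=
        mul_le_mul hc19 he27 (by norm_num) (by linarith)
      calc (1:ℝ) ≤ 2*(0.19*2.7) := by norm_num
      _ ≤ 2*(c*Real.exp 1) := by linarith
      _ = 2*c*Real.exp 1 := by ring
    have h9 : (Real.sqrt s * Real.exp (-(c*s)))^2 ≤ 1 := by rw [h6]; linarith
    nlinarith [mul_nonneg (Real.sqrt_nonneg s) (Real.exp_pos (-(c*s))).le]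
  have hC1 : (1:ℝ) ≤ Real.exp (1 / Real.sqrt 2) := by
    rw [← Real.exp_zero]; apply Real.exp_le_exp.2; positivity
  have hss : Real.sqrt s * Real.sqrt s = s := Real.mul_self_sqrt hs0.le
  have key2 : s * Real.exp (-(c*s)) ≤ Real.exp (1/Real.sqrt 2) * Real.sqrt s := by
    calc s * Real.exp (-(c*s)) = (Real.sqrt s * Real.exp (-(c*s))) * Real.sqrt s := by
          linear_combination (-Real.exp (-(c*s))) * hss
    _ ≤ 1 * Real.sqrt s := by
          apply mul_le_mul_of_nonneg_right hsx (Real.sqrt_nonneg s)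
    _ ≤ Real.exp (1/Real.sqrt 2) * Real.sqrt s := by
          apply mul_le_mul_of_nonneg_right hC1 (Real.sqrt_nonneg s)
  calc |lam - s| * poissonPmf lam x
      ≤ s * (Real.exp (s * Real.log (lam / s) + s - lam) / Real.sqrt (2*π*s)) :=
        mul_le_mul habs hpmf (pmf_nonneg lam hlam.le x) hs0.le
    _ ≤ s * (Real.exp (-(c*s)) / Real.sqrt (2*π*s)) := by
        apply mul_le_mul_of_nonneg_left ?_ hs0.le
        apply div_le_div_of_nonneg_right (Real.exp_le_exp.2 hg) (by positivity)
    _ = s * Real.exp (-(c*s)) / (Real.sqrt (2*π) * Real.sqrt s) := by rw [hsq2]; ring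
    _ ≤ (Real.exp (1/Real.sqrt 2) * Real.sqrt s) / (Real.sqrt (2*π) * Real.sqrt s) := by
        apply div_le_div_of_nonneg_right key2 (by positivity)
    _ = Real.exp (1/Real.sqrt 2) / Real.sqrt (2*π) := by
        rw [mul_div_mul_right _ _ (Real.sqrt_pos.2 hs0).ne']
set_option maxHeartbeats 1600000 in
lemma caseB2 (lam : ℝ) (hlam : 0 < lam) (x : ℕ) (hx1 : 1 ≤ x) (hx : 2 * (x:ℝ) ≤ lam) :
    |lam - (x:ℝ)| * poissonPmf lam x ≤ Real.exp (1 / Real.sqrt 2) / Real.sqrt (2 * π) := by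
  rcases eq_or_lt_of_le hx1 with h1 | h2
  · -- x = 1
    have hx1' : x = 1 := h1.symm
    subst hx1'
    have hl2 : 2 ≤ lam := by push_cast at hx; linarith
    have hP : poissonPmf lam 1 = Real.exp (-lam) * lam := by
      unfold poissonPmf; norm_num
    have habs : |lam - ((1:ℕ):ℝ)| = lam - 1 := by
      rw [abs_of_nonneg] <;> push_cast <;> linarith
    rw [hP, habs]
    push_cast
    have ha : lam / 2 * Real.exp 1 ≤ Real.exp (lam / 2) := by
      have h := Real.add_one_le_exp (lam/2 - 1)
      have he : Real.exp (lam/2 - 1) * Real.exp 1 = Real.exp (lam/2) := by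
        rw [← Real.exp_add]; ring_nf
      nlinarith [Real.exp_pos (1:ℝ), Real.exp_pos (lam/2-1)]
    have hb : lam^2 * Real.exp 1^2 ≤ 4 * Real.exp lam := by
      have h2' : (lam/2 * Real.exp 1)^2 ≤ Real.exp (lam/2)^2 := by
        apply pow_le_pow_left₀ (by positivity) ha
      have he2 : Real.exp (lam/2)^2 = Real.exp lam := by
        rw [sq, ← Real.exp_add]; congr 1; ring
      nlinarith
    have hc : (lam - 1) * (Real.exp (-lam) * lam) ≤ 4 / Real.exp 1^2 := by
      have hel : (0:ℝ) < Real.exp lam := Real.exp_pos lam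
      rw [Real.exp_neg, le_div_iff₀ (by positivity : (0:ℝ) < Real.exp 1^2)]
      rw [show (lam - 1) * ((Real.exp lam)⁻¹ * lam) * Real.exp 1^2
          = (lam - 1) * lam * Real.exp 1^2 / Real.exp lam by ring, div_le_iff₀ hel]
      nlinarith [sq_nonneg (Real.exp 1)]
    refine hc.trans ?_
    rw [div_le_div_iff₀ (by positivity) (by positivity)]
    have he27 : (2.71:ℝ) ≤ Real.exp 1 := by linarith [Real.exp_one_gt_d9]
    have he2 : (7.3441:ℝ) ≤ Real.exp 1^2 := by nlinarith
    have := mul_le_mul expC_lb he2 (by norm_num) (Real.exp_pos _).le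
    nlinarith [sqrt_two_pi_ub, Real.sqrt_nonneg (2*π)]
  · -- x ≥ 2
    have hx2 : 2 ≤ x := h2
    set s : ℝ := (x:ℝ) with hs
    have hs2 : (2:ℝ) ≤ s := by rw [hs]; exact_mod_cast hx2
    have hs0 : (0:ℝ) < s := by linarith
    set c : ℝ := (1 - Real.log 2)/2 with hc
    have hcpos : 0 < c := by
      have := Real.log_two_lt_d9; rw [hc]; linarith
    have hg : s * Real.log (lam / s) + s - lam ≤ -(c * lam) := by
      have h1 : Real.log (lam/(2*s)) ≤ lam/(2*s) - 1 :=
        Real.log_le_sub_one_of_pos (by positivity)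
      have h3 : Real.log (lam/s) = Real.log (lam/(2*s)) + Real.log 2 := by
        rw [← Real.log_mul (by positivity) (by norm_num)]
        congr 1; field_simp
      have h4 : s * (lam/(2*s)) = lam/2 := by field_simp
      have h5 : s * Real.log (lam/s) ≤ lam/2 - s + s * Real.log 2 := by
        rw [h3]; nlinarith
      have hlog2 : (0:ℝ) < Real.log 2 := Real.log_pos (by norm_num)
      have h6 : s * Real.log 2 ≤ lam/2 * Real.log 2 := by nlinarith
      rw [hc]; nlinarith [Real.log_two_lt_d9]
    have hpmf := pmf_le_exp lam hlam x hx1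
    have habs : |lam - s| ≤ lam := by
      rw [abs_of_nonneg (by linarith)]; linarith
    have hlin : lam * Real.exp (-(c*lam)) ≤ 1/(c*Real.exp 1) := exp_lin hcpos hlam.le
    have hsq : Real.sqrt (2*π) * Real.sqrt 2 ≤ Real.sqrt (2*π*s) := by
      rw [← Real.sqrt_mul (by positivity)]
      apply Real.sqrt_le_sqrt; nlinarith [Real.pi_pos]
    have hsqpos : (0:ℝ) < Real.sqrt (2*π) * Real.sqrt 2 := by positivity
    have hfinal : 1/(c*Real.exp 1) / (Real.sqrt (2*π) * Real.sqrt 2)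
        ≤ Real.exp (1/Real.sqrt 2) / Real.sqrt (2*π) := by
      rw [div_le_div_iff₀ hsqpos (by positivity)]
      have hce : (0.415:ℝ) ≤ c * Real.exp 1 := by
        have hc1 : (0.1534:ℝ) ≤ c := by rw [hc]; linarith [Real.log_two_lt_d9]
        have he : (2.71:ℝ) ≤ Real.exp 1 := by linarith [Real.exp_one_gt_d9]
        have := mul_le_mul hc1 he (by norm_num) (by linarith)
        linarith
      have h1ce : 1/(c*Real.exp 1) ≤ 2.45 := by
        rw [div_le_iff₀ (by positivity)]; linarith
      have h2e : (2.45:ℝ) ≤ Real.exp (1/Real.sqrt 2) * Real.sqrt 2 := by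
        have := mul_le_mul expC_lb sqrt2_lb (by norm_num) (Real.exp_pos _).le
        linarith
      calc 1/(c*Real.exp 1) * Real.sqrt (2*π) ≤ 2.45 * Real.sqrt (2*π) := by
            apply mul_le_mul_of_nonneg_right h1ce (Real.sqrt_nonneg _)
      _ ≤ (Real.exp (1/Real.sqrt 2) * Real.sqrt 2) * Real.sqrt (2*π) := by
            apply mul_le_mul_of_nonneg_right h2e (Real.sqrt_nonneg _)
      _ = Real.exp (1/Real.sqrt 2) * (Real.sqrt (2*π) * Real.sqrt 2) := by ring
    calc |lam - s| * poissonPmf lam x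
        ≤ lam * (Real.exp (s * Real.log (lam / s) + s - lam) / Real.sqrt (2*π*s)) :=
          mul_le_mul habs hpmf (pmf_nonneg lam hlam.le x) hlam.le
      _ ≤ lam * (Real.exp (-(c*lam)) / Real.sqrt (2*π*s)) := by
          apply mul_le_mul_of_nonneg_left ?_ hlam.le
          apply div_le_div_of_nonneg_right (Real.exp_le_exp.2 hg) (by positivity)
      _ = lam * Real.exp (-(c*lam)) / Real.sqrt (2*π*s) := by ring
      _ ≤ (1/(c*Real.exp 1)) / (Real.sqrt (2*π) * Real.sqrt 2) := by
          apply div_le_div₀ (by positivity) hlin hsqpos hsq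
      _ ≤ Real.exp (1/Real.sqrt 2) / Real.sqrt (2*π) := hfinal

set_option maxHeartbeats 1600000 in
lemma caseB1 (lam : ℝ) (hlam : 0 < lam) (x : ℕ) (hxl : (x:ℝ) ≤ lam) (hlx : lam ≤ 2*(x:ℝ)) :
    |lam - (x:ℝ)| * poissonPmf lam x ≤ Real.exp (1 / Real.sqrt 2) / Real.sqrt (2 * π) := by
  set s : ℝ := (x:ℝ) with hs
  have hs0 : (0:ℝ) < s := by linarith
  have hx1 : 1 ≤ x := Nat.one_le_iff_ne_zero.2 (by rintro rfl; simp [hs] at hs0)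
  set t : ℝ := lam - s with ht
  have ht0 : 0 ≤ t := by rw [ht]; linarith
  have hts : t ≤ s := by rw [ht]; linarith
  set u : ℝ := t / s with hu
  have hu0 : 0 ≤ u := by positivity
  have hu1 : u ≤ 1 := by rw [hu, div_le_one hs0]; linarith
  have htu : t = s * u := by rw [hu]; field_simp
  have hlamsu : lam / s = 1 + u := by rw [hu, ht]; field_simp; ring
  have hL1 : Real.log (1 + u) ≤ u - u^2/2 + u^3/3 := log_le_cubic hu0
  have hg : s * Real.log (lam / s) + s - lam ≤ -(t^2 / (2 * (3 * lam))) := by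
    rw [show -(t^2 / (2*(3*lam))) = (-(t^2))/(6*lam) by ring, le_div_iff₀ (by positivity)]
    have h1 : s * Real.log (lam/s) ≤ s * (u - u^2/2 + u^3/3) := by
      rw [hlamsu]; exact mul_le_mul_of_nonneg_left hL1 hs0.le
    have h2 : 0 ≤ 3*lam - 2*lam*u - s := by nlinarith
    have h3 : 0 ≤ s * u^2 * (3*lam - 2*lam*u - s) := by positivity
    have hident : -(t^2) - (s * (u - u^2/2 + u^3/3) - t) * (6*lam)
        = s * u^2 * (3*lam - 2*lam*u - s) + (5*lam - 2*lam*u - 6*lam)*0 := by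
      rw [htu]; ring
    have h4 : s - lam = -t := by rw [ht]; ring
    nlinarith [mul_le_mul_of_nonneg_right h1 (by positivity : (0:ℝ) ≤ 6*lam)]
  have hpmf := pmf_le_exp lam hlam x hx1
  have habs : |lam - s| = t := by
    rw [abs_of_nonneg (show (0:ℝ) ≤ lam - s by linarith), ht]
  have hgauss : t * Real.exp (-(t^2/(2*(3*lam)))) ≤ Real.sqrt (3*lam) * Real.exp (-(1/2:ℝ)) :=
    gauss_lin (by positivity) ht0
  have hsq : Real.sqrt π * Real.sqrt lam ≤ Real.sqrt (2*π*s) := by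
    rw [← Real.sqrt_mul (by positivity)]
    apply Real.sqrt_le_sqrt; nlinarith [Real.pi_pos]
  have hsqpos : (0:ℝ) < Real.sqrt π * Real.sqrt lam := by positivity
  have hnum : Real.sqrt 3 * Real.exp (-(1/2:ℝ)) * Real.sqrt 2 ≤ Real.exp (1/Real.sqrt 2) := by
    have he : (1.6:ℝ) ≤ Real.exp (1/2:ℝ) := by
      nlinarith [Real.exp_one_gt_d9, Real.exp_pos (1/2:ℝ),
        (by rw [← Real.exp_add]; norm_num : Real.exp (1/2:ℝ) * Real.exp (1/2:ℝ) = Real.exp 1)]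
    have he' : Real.exp (-(1/2:ℝ)) ≤ 0.625 := by
      rw [Real.exp_neg, inv_le_comm₀ (Real.exp_pos _) (by norm_num)]
      linarith
    have h3 : Real.sqrt 3 ≤ 1.74 := by
      rw [show (1.74:ℝ) = Real.sqrt (1.74^2) by rw [Real.sqrt_sq (by norm_num)]]
      apply Real.sqrt_le_sqrt; norm_num
    have h43 : Real.sqrt 2 ≤ 1.43 := by nlinarith [sqrt2_ub]
    calc Real.sqrt 3 * Real.exp (-(1/2:ℝ)) * Real.sqrt 2 ≤ 1.74 * 0.625 * 1.43 := by
          exact mul_le_mul (mul_le_mul h3 he' (Real.exp_pos _).le (by norm_num)) h43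
            (Real.sqrt_nonneg 2) (by norm_num)
    _ ≤ 1.8225 := by norm_num
    _ ≤ Real.exp (1/Real.sqrt 2) := expC_lb
  have hfinal : Real.sqrt (3*lam) * Real.exp (-(1/2:ℝ)) / (Real.sqrt π * Real.sqrt lam)
      ≤ Real.exp (1/Real.sqrt 2) / Real.sqrt (2*π) := by
    rw [div_le_div_iff₀ hsqpos (by positivity)]
    have h31 : Real.sqrt (3*lam) = Real.sqrt 3 * Real.sqrt lam := Real.sqrt_mul (by norm_num) _
    have h2p : Real.sqrt (2*π) = Real.sqrt 2 * Real.sqrt π := Real.sqrt_mul (by norm_num) _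
    rw [h31, h2p]
    calc Real.sqrt 3 * Real.sqrt lam * Real.exp (-(1/2:ℝ)) * (Real.sqrt 2 * Real.sqrt π)
        = (Real.sqrt 3 * Real.exp (-(1/2:ℝ)) * Real.sqrt 2) * (Real.sqrt π * Real.sqrt lam) := by
          ring
    _ ≤ Real.exp (1/Real.sqrt 2) * (Real.sqrt π * Real.sqrt lam) := by
          apply mul_le_mul_of_nonneg_right hnum hsqpos.le
  calc |lam - s| * poissonPmf lam x
      ≤ t * (Real.exp (s * Real.log (lam / s) + s - lam) / Real.sqrt (2*π*s)) := by
        rw [habs]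
        exact mul_le_mul_of_nonneg_left hpmf ht0
    _ ≤ t * (Real.exp (-(t^2/(2*(3*lam)))) / Real.sqrt (2*π*s)) := by
        apply mul_le_mul_of_nonneg_left ?_ ht0
        apply div_le_div_of_nonneg_right (Real.exp_le_exp.2 hg) (by positivity)
    _ = t * Real.exp (-(t^2/(2*(3*lam)))) / Real.sqrt (2*π*s) := by ring
    _ ≤ (Real.sqrt (3*lam) * Real.exp (-(1/2:ℝ))) / (Real.sqrt π * Real.sqrt lam) := by
        apply div_le_div₀ (by positivity) hgauss hsqpos hsq
    _ ≤ Real.exp (1/Real.sqrt 2) / Real.sqrt (2*π) := hfinal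

set_option maxHeartbeats 1600000 in
lemma caseC (lam : ℝ) (hlam : 0 < lam) (x : ℕ) (hxl : lam ≤ (x:ℝ)) (hlx : (x:ℝ) ≤ 2*lam) :
    |lam - (x:ℝ)| * poissonPmf lam x ≤ Real.exp (1 / Real.sqrt 2) / Real.sqrt (2 * π) := by
  set s : ℝ := (x:ℝ) with hs
  have hs0 : (0:ℝ) < s := by linarith
  have hx1 : 1 ≤ x := Nat.one_le_iff_ne_zero.2 (by rintro rfl; simp [hs] at hs0)
  set r : ℝ := s - lam with hr
  have hr0 : 0 ≤ r := by rw [hr]; linarith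
  set u : ℝ := r / lam with hu
  have hu0 : 0 ≤ u := by positivity
  have hu1 : u ≤ 1 := by rw [hu, div_le_one hlam]; rw [hr]; linarith
  have hru : r = lam * u := by rw [hu]; field_simp
  have hsu : s = lam * (1 + u) := by rw [hu, hr]; field_simp; ring
  have h1u : (0:ℝ) < 1 + u := by linarith
  have hlamsu : lam / s = (1 + u)⁻¹ := by
    rw [hsu, mul_comm, div_mul_eq_div_div_swap, div_self hlam.ne', one_div]
  have hL3 : u - u^2/2 + u^3/3 - u^4/4 ≤ Real.log (1 + u) := quartic_le_log hu0
  have hg : s * Real.log (lam / s) + s - lam ≤ -(r^2 / (2 * (3 * lam))) := by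
    rw [show -(r^2 / (2*(3*lam))) = (-(r^2))/(6*lam) by ring, le_div_iff₀ (by positivity)]
    have hlog : Real.log (lam/s) = -Real.log (1+u) := by
      rw [hlamsu, Real.log_inv]
    have h1 : s * Real.log (lam/s) ≤ s * (-(u - u^2/2 + u^3/3 - u^4/4)) := by
      rw [hlog]
      apply mul_le_mul_of_nonneg_left (by linarith) hs0.le
    have h2 : 0 ≤ 6*lam^2 * (u^2*((1-u)*(1/3 + u/6 + u^2/4))) := by
      have h1mu : (0:ℝ) ≤ 1 - u := by linarith
      apply mul_nonneg (by positivity)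
      exact mul_nonneg (sq_nonneg u) (mul_nonneg h1mu (by positivity))
    have hident : -(r^2) - (s * (-(u - u^2/2 + u^3/3 - u^4/4)) + s - lam) * (6*lam)
        = 6*lam^2 * (u^2*((1-u)*(1/3 + u/6 + u^2/4))) := by
      rw [hru, hsu]; ring
    nlinarith [mul_le_mul_of_nonneg_right h1 (by positivity : (0:ℝ) ≤ 6*lam)]
  have hpmf := pmf_le_exp lam hlam x hx1
  have habs : |lam - s| = r := by
    rw [abs_sub_comm, abs_of_nonneg (show (0:ℝ) ≤ s - lam by linarith), hr]
  have hgauss : r * Real.exp (-(r^2/(2*(3*lam)))) ≤ Real.sqrt (3*lam) * Real.exp (-(1/2:ℝ)) :=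
    gauss_lin (by positivity) hr0
  have hsq : Real.sqrt (2*π) * Real.sqrt lam ≤ Real.sqrt (2*π*s) := by
    rw [← Real.sqrt_mul (by positivity)]
    apply Real.sqrt_le_sqrt; nlinarith [Real.pi_pos]
  have hsqpos : (0:ℝ) < Real.sqrt (2*π) * Real.sqrt lam := by positivity
  have hnum : Real.sqrt 3 * Real.exp (-(1/2:ℝ)) ≤ Real.exp (1/Real.sqrt 2) := by
    have he : (1.6:ℝ) ≤ Real.exp (1/2:ℝ) := by
      nlinarith [Real.exp_one_gt_d9, Real.exp_pos (1/2:ℝ),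
        (by rw [← Real.exp_add]; norm_num : Real.exp (1/2:ℝ) * Real.exp (1/2:ℝ) = Real.exp 1)]
    have he' : Real.exp (-(1/2:ℝ)) ≤ 0.625 := by
      rw [Real.exp_neg, inv_le_comm₀ (Real.exp_pos _) (by norm_num)]
      linarith
    have h3 : Real.sqrt 3 ≤ 1.74 := by
      rw [show (1.74:ℝ) = Real.sqrt (1.74^2) by rw [Real.sqrt_sq (by norm_num)]]
      apply Real.sqrt_le_sqrt; norm_num
    calc Real.sqrt 3 * Real.exp (-(1/2:ℝ)) ≤ 1.74 * 0.625 := by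
          exact mul_le_mul h3 he' (Real.exp_pos _).le (by norm_num)
    _ ≤ 1.8225 := by norm_num
    _ ≤ Real.exp (1/Real.sqrt 2) := expC_lb
  have hfinal : Real.sqrt (3*lam) * Real.exp (-(1/2:ℝ)) / (Real.sqrt (2*π) * Real.sqrt lam)
      ≤ Real.exp (1/Real.sqrt 2) / Real.sqrt (2*π) := by
    rw [div_le_div_iff₀ hsqpos (by positivity)]
    have h31 : Real.sqrt (3*lam) = Real.sqrt 3 * Real.sqrt lam := Real.sqrt_mul (by norm_num) _
    rw [h31]
    calc Real.sqrt 3 * Real.sqrt lam * Real.exp (-(1/2:ℝ)) * Real.sqrt (2*π)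
        = (Real.sqrt 3 * Real.exp (-(1/2:ℝ))) * (Real.sqrt (2*π) * Real.sqrt lam) := by ring
    _ ≤ Real.exp (1/Real.sqrt 2) * (Real.sqrt (2*π) * Real.sqrt lam) := by
          apply mul_le_mul_of_nonneg_right hnum hsqpos.le
  calc |lam - s| * poissonPmf lam x
      ≤ r * (Real.exp (s * Real.log (lam / s) + s - lam) / Real.sqrt (2*π*s)) := by
        rw [habs]
        exact mul_le_mul_of_nonneg_left hpmf hr0
    _ ≤ r * (Real.exp (-(r^2/(2*(3*lam)))) / Real.sqrt (2*π*s)) := by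
        apply mul_le_mul_of_nonneg_left ?_ hr0
        apply div_le_div_of_nonneg_right (Real.exp_le_exp.2 hg) (by positivity)
    _ = r * Real.exp (-(r^2/(2*(3*lam)))) / Real.sqrt (2*π*s) := by ring
    _ ≤ (Real.sqrt (3*lam) * Real.exp (-(1/2:ℝ))) / (Real.sqrt (2*π) * Real.sqrt lam) := by
        apply div_le_div₀ (by positivity) hgauss hsqpos hsq
    _ ≤ Real.exp (1/Real.sqrt 2) / Real.sqrt (2*π) := hfinal

lemma pmf_le_one (lam : ℝ) (hlam : 0 < lam) (x : ℕ) : poissonPmf lam x ≤ 1 := by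
  have h := Real.sum_le_exp_of_nonneg hlam.le (x+1)
  have hterm : lam^x/(Nat.factorial x : ℝ) ≤ ∑ i ∈ Finset.range (x+1), lam^i/(Nat.factorial i : ℝ) := by
    apply Finset.single_le_sum (f := fun i => lam^i/(Nat.factorial i : ℝ))
      (fun i _ => by positivity) (Finset.self_mem_range_succ x)
  have h2 : lam^x/(Nat.factorial x : ℝ) ≤ Real.exp lam := le_trans hterm h
  unfold poissonPmf
  calc Real.exp (-lam) * lam^x / (Nat.factorial x : ℝ)
      = (lam^x / (Nat.factorial x:ℝ)) * Real.exp (-lam) := by ring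
  _ ≤ Real.exp lam * Real.exp (-lam) := mul_le_mul_of_nonneg_right h2 (Real.exp_pos _).le
  _ = 1 := by rw [← Real.exp_add]; simp

lemma pmf_diff (lam : ℝ) (hlam : 0 < lam) (n : ℕ) :
    poissonPmf lam (n+1) - poissonPmf lam n
      = (lam - (n+1:ℕ)) * poissonPmf lam (n+1) / lam := by
  unfold poissonPmf
  have hf : ((Nat.factorial (n+1) : ℝ)) = (n+1) * Nat.factorial n := by
    rw [Nat.factorial_succ]; push_cast; ring
  have hfn : (Nat.factorial n : ℝ) ≠ 0 := Nat.cast_ne_zero.2 (Nat.factorial_ne_zero n)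
  have hfn1 : ((n:ℝ)+1) ≠ 0 := by positivity
  rw [hf]
  push_cast
  field_simp
  ring

/-- For every `x ∈ ℕ`, `|P_λ(x) − P_λ(x−1)| ≤ min(1, C/λ)` with the convention
`P_λ(−1) = 0`, where `C = e^{1/√2}/√(2π)`; moreover `C ≤ 1`. -/
theorem poisson_pointwise_difference_bound (lam : ℝ) (hlam : 0 < lam) :
    (∀ x : ℕ,
      |poissonPmf lam x - (if x = 0 then 0 else poissonPmf lam (x - 1))| ≤
        min 1 (Real.exp (1 / Real.sqrt 2) / Real.sqrt (2 * Real.pi) / lam)) ∧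
    Real.exp (1 / Real.sqrt 2) / Real.sqrt (2 * Real.pi) ≤ 1 := by
  constructor
  · intro x
    have hC : (0:ℝ) < Real.exp (1 / Real.sqrt 2) / Real.sqrt (2 * π) := by positivity
    refine le_min ?_ ?_
    · -- ≤ 1
      cases x with
      | zero =>
        simp only [reduceIte, sub_zero]
        rw [abs_of_nonneg (pmf_nonneg lam hlam.le 0)]
        exact pmf_le_one lam hlam 0
      | succ n =>
        simp only [Nat.succ_ne_zero, if_false, Nat.succ_sub_one]
        rw [abs_le]
        constructor
        · linarith [pmf_nonneg lam hlam.le (n+1), pmf_le_one lam hlam n]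
        · linarith [pmf_nonneg lam hlam.le n, pmf_le_one lam hlam (n+1)]
    · -- ≤ C / lam
      cases x with
      | zero =>
        simp only [reduceIte, sub_zero]
        have hP0 : poissonPmf lam 0 = Real.exp (-lam) := by
          unfold poissonPmf; norm_num
        rw [hP0, abs_of_nonneg (Real.exp_pos _).le, le_div_iff₀ hlam]
        have h1 : lam * Real.exp (-(1*lam)) ≤ 1/(1*Real.exp 1) := exp_lin one_pos hlam.le
        have h2 : Real.exp (-lam) * lam ≤ 1/Real.exp 1 := by
          rw [mul_comm]
          simpa using h1
        refine h2.trans ?_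
        rw [div_le_div_iff₀ (Real.exp_pos 1) (by positivity)]
        have := mul_le_mul expC_lb (show (2.71:ℝ) ≤ Real.exp 1 by linarith [Real.exp_one_gt_d9])
          (by norm_num) (Real.exp_pos _).le
        nlinarith [sqrt_two_pi_ub]
      | succ n =>
        simp only [Nat.succ_ne_zero, if_false, Nat.succ_sub_one]
        have hkey : |lam - ((n+1:ℕ):ℝ)| * poissonPmf lam (n+1)
            ≤ Real.exp (1 / Real.sqrt 2) / Real.sqrt (2 * π) := by
          rcases le_or_gt (2*((n+1:ℕ):ℝ)) lam with h1 | h1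
          · exact caseB2 lam hlam (n+1) (Nat.le_add_left 1 n) h1
          · rcases le_or_gt ((n+1:ℕ):ℝ) lam with h2 | h2
            · exact caseB1 lam hlam (n+1) h2 h1.le
            · rcases le_or_gt ((n+1:ℕ):ℝ) (2*lam) with h3 | h3
              · exact caseC lam hlam (n+1) h2.le h3
              · exact caseD lam hlam (n+1) h3.le
        rw [pmf_diff lam hlam n, abs_div, abs_of_pos hlam, abs_mul,
          abs_of_nonneg (pmf_nonneg lam hlam.le (n+1))]
        apply div_le_div_of_nonneg_right ?_ hlam.le
        exact_mod_cast hkey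
  · exact C_le_one
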